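/- Let s be a positive integer, let 0 < ε < 1 be real, let A, B ⊆ ZMod s, and set α = |B|/s. Then the number of elements x ∈ ZMod s for which |(A + x) ∩ B| ≥ (1 − ε)·α·|A| is at least (ε·α / (1 − (1 − ε)·α)) · s. -/

import Mathlib

lemma nextShiftVolume_aux (s : ℕ) (A' B' : Finset (ZMod s)) (x : ZMod s) :
    (A'.image (· + x)) ∩ B' = (A'.filter (fun a => a + x ∈ B')).image (· + x) := by
  ext y
  simp only [Finset.mem_inter, Finset.mem_image, Finset.mem_filter]
  constructor
  · rintro ⟨⟨c, hc, hcy⟩, hb⟩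
    exact ⟨c, ⟨hc, by rwa [hcy]⟩, hcy⟩
  · rintro ⟨c, ⟨hc, hb⟩, hcy⟩
    exact ⟨⟨c, hc, hcy⟩, by rwa [← hcy]⟩

/-- For `0 < ε < 1` and `A, B ⊆ ZMod s` with `α = |B|/s`, the number of `x` with
`|(A + x) ∩ B| ≥ (1 - ε) * α * |A|` is at least `(ε * α / (1 - (1 - ε) * α)) * s`. -/
theorem nextShiftVolume (s : ℕ) (hs : 0 < s) (ε : ℝ) (hε0 : 0 < ε) (hε1 : ε < 1)
    (A B : Set (ZMod s)) (α : ℝ) (hα : α = (B.ncard : ℝ) / s) :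
    ε * α / (1 - (1 - ε) * α) * s ≤
      ({x : ZMod s |
        (1 - ε) * α * (A.ncard : ℝ) ≤ ((((· + x) '' A) ∩ B).ncard : ℝ)}.ncard : ℝ) := by
  classical
  haveI : NeZero s := ⟨hs.ne'⟩
  set A' := A.toFinset with hA'
  set B' := B.toFinset with hB'
  set P : ZMod s → Prop := fun x =>
    (1 - ε) * α * (A.ncard : ℝ) ≤ ((((· + x) '' A) ∩ B).ncard : ℝ) with hP
  set T := Finset.univ.filter P with hT
  have hTcard : ({x : ZMod s | P x}.ncard : ℝ) = (T.card : ℝ) := by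
    norm_cast
    rw [Set.ncard_eq_toFinset_card']
    congr 1
    ext x; simp [hT]
  have hAcard : A.ncard = A'.card := Set.ncard_eq_toFinset_card' A
  have hBcard : B.ncard = B'.card := Set.ncard_eq_toFinset_card' B
  have hN : ∀ x : ZMod s, (((· + x) '' A) ∩ B).ncard = ((A'.image (· + x)) ∩ B').card := by
    intro x
    rw [Set.ncard_eq_toFinset_card']
    congr 1
    ext y
    simp [A', B']
  have hkey : ∑ x : ZMod s, ((A'.image (· + x)) ∩ B').card = A'.card * B'.card := by
    have h1 : ∀ x : ZMod s, ((A'.image (· + x)) ∩ B').card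
        = (A'.filter (fun a => a + x ∈ B')).card := by
      intro x
      rw [nextShiftVolume_aux, Finset.card_image_of_injective _ (add_left_injective x)]
    simp only [h1, Finset.card_filter]
    rw [Finset.sum_comm]
    have h2 : ∀ a : ZMod s, (∑ x : ZMod s, if a + x ∈ B' then 1 else 0) = B'.card := by
      intro a
      have he := Equiv.sum_comp (Equiv.addLeft a) (fun y => if y ∈ B' then (1:ℕ) else 0)
      change (∑ i : ZMod s, if a + i ∈ B' then (1:ℕ) else 0) = _ at he
      rw [he]
      rw [← Finset.card_filter]; simp
    simp only [h2, Finset.sum_const, smul_eq_mul]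
  -- bound on each term
  have hle : ∀ x : ZMod s, ((A'.image (· + x)) ∩ B').card ≤ A'.card := fun x =>
    le_trans (Finset.card_le_card (Finset.inter_subset_left)) (Finset.card_image_le)
  have hcards : (Finset.univ.filter (fun x => ¬ P x)).card = s - T.card := by
    have h := Finset.card_filter_add_card_filter_not (s := (Finset.univ : Finset (ZMod s))) (p := P)
    rw [Finset.card_univ, ZMod.card] at h
    rw [← hT] at h
    omega
  have htle : T.card ≤ s := by
    calc T.card ≤ Finset.univ.card := Finset.card_le_card (Finset.filter_subset _ _)
    _ = s := by rw [Finset.card_univ, ZMod.card]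
  -- real versions
  set a : ℝ := (A'.card : ℝ) with ha
  set b : ℝ := (B'.card : ℝ) with hb
  set t : ℝ := (T.card : ℝ) with ht
  have hbα : b = α * s := by
    rw [hα, hBcard]
    field_simp
    exact hb
  have hα0 : 0 ≤ α := by
    rw [hα]; positivity
  have hα1 : α ≤ 1 := by
    rw [hα, div_le_one (by exact_mod_cast hs)]
    norm_cast
    rw [hBcard]
    calc B'.card ≤ Finset.univ.card := Finset.card_le_card (Finset.subset_univ _)
    _ = s := by rw [Finset.card_univ, ZMod.card]
  have hc1 : (1 - ε) * α < 1 := by nlinarith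
  have hsum : ∑ x : ZMod s, (((A'.image (· + x)) ∩ B').card : ℝ) = a * b := by
    rw [← Nat.cast_sum, hkey]; push_cast; ring
  have hsplit : a * b ≤ t * a + ((s : ℝ) - t) * ((1 - ε) * α * a) := by
    rw [← hsum, ← Finset.sum_filter_add_sum_filter_not Finset.univ P]
    have e1 : ∑ x ∈ Finset.univ.filter P, (((A'.image (· + x)) ∩ B').card : ℝ) ≤ t * a := by
      calc ∑ x ∈ Finset.univ.filter P, (((A'.image (· + x)) ∩ B').card : ℝ)
          ≤ ∑ _x ∈ Finset.univ.filter P, a := by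
            apply Finset.sum_le_sum
            intro x _
            rw [ha]
            exact_mod_cast hle x
        _ = t * a := by rw [Finset.sum_const, ← hT]; simp [ht]
    have e2 : ∑ x ∈ Finset.univ.filter (fun x => ¬ P x), (((A'.image (· + x)) ∩ B').card : ℝ)
        ≤ ((s : ℝ) - t) * ((1 - ε) * α * a) := by
      calc ∑ x ∈ Finset.univ.filter (fun x => ¬ P x), (((A'.image (· + x)) ∩ B').card : ℝ)
          ≤ ∑ _x ∈ Finset.univ.filter (fun x => ¬ P x), (1 - ε) * α * a := by
            apply Finset.sum_le_sum
            intro x hx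
            have hx' : ¬ P x := (Finset.mem_filter.mp hx).2
            simp only [hP, not_le] at hx'
            rw [hN x, hAcard] at hx'
            rw [ha]
            exact le_of_lt hx'
        _ = ((s : ℝ) - t) * ((1 - ε) * α * a) := by
            rw [Finset.sum_const, hcards]
            have : ((s - T.card : ℕ) : ℝ) = (s : ℝ) - t := by
              rw [ht]; push_cast [Nat.cast_sub htle]; ring
            simp [this]
    linarith
  -- finish
  rw [hTcard, div_mul_eq_mul_div, div_le_iff₀ (by linarith)]
  rcases Nat.eq_zero_or_pos A'.card with h0 | hpos
  · -- A empty : T = univ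
    have : T = Finset.univ := by
      rw [hT]
      apply Finset.filter_true_of_mem
      intro x _
      rw [hP, hAcard, h0]
      simp
    have hts : t = s := by rw [ht, this, Finset.card_univ, ZMod.card]
    rw [hts]
    have hs' : (0:ℝ) < s := by exact_mod_cast hs
    nlinarith
  · have ha0 : 0 < a := by rw [ha]; exact_mod_cast hpos
    rw [hbα] at hsplit
    nlinarith
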